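/- For every finite graph G, the chromatic number satisfies χ(G) ≤ wd(G) + 1, where wd(G) is the weak degeneracy of G. -/

import Mathlib

open SimpleGraph

universe u

/-- `G` is strictly `f`-degenerate: every nonempty subgraph `R` of `G` contains a vertex `v`
with `d_R(v) < f(v)`. -/
def StrictlyDegenerate {V : Type u} (G : SimpleGraph V) (f : V → ℤ) : Prop :=
  ∀ R : G.Subgraph, R.verts.Nonempty → ∃ v ∈ R.verts, ((R.neighborSet v).ncard : ℤ) < f v

/-- `G` is `k`-degenerate: every nonempty subgraph has a vertex of degree at most `k`. -/
def Degenerate {V : Type u} (G : SimpleGraph V) (k : ℕ) : Prop :=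
  ∀ R : G.Subgraph, R.verts.Nonempty → ∃ v ∈ R.verts, (R.neighborSet v).ncard ≤ k

open Classical in
/-- `WeakReduce G S f` : the graph induced by the set `S` of remaining vertices, together with
the function `f`, can be reduced to the null graph by a sequence of legal `Delete` and
`DeleteSave` operations. -/
inductive WeakReduce {V : Type u} (G : SimpleGraph V) : Set V → (V → ℤ) → Prop
  | nil (f : V → ℤ) : WeakReduce G ∅ f
  | delete (S : Set V) (f : V → ℤ) (u : V) (hu : u ∈ S) (h0 : 0 ≤ f u)
      (hpos : ∀ x ∈ S \ {u}, 0 ≤ f x - (if G.Adj u x then 1 else 0))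
      (ih : WeakReduce G (S \ {u}) (fun x => f x - (if G.Adj u x then 1 else 0))) :
      WeakReduce G S f
  | deleteSave (S : Set V) (f : V → ℤ) (a b : V) (ha : a ∈ S) (hb : b ∈ S)
      (hab : G.Adj a b) (hfab : f b < f a)
      (hpos : ∀ x ∈ S \ {a}, 0 ≤ f x - (if G.Adj a x ∧ x ≠ b then 1 else 0))
      (ih : WeakReduce G (S \ {a}) (fun x => f x - (if G.Adj a x ∧ x ≠ b then 1 else 0))) :
      WeakReduce G S f

/-- `G` is weakly `f`-degenerate. -/
def WeaklyFDegenerate {V : Type u} (G : SimpleGraph V) (f : V → ℤ) : Prop :=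
  WeakReduce G Set.univ f

/-- `G` is weakly `k`-degenerate. -/
def WeaklyDegenerate {V : Type u} (G : SimpleGraph V) (k : ℕ) : Prop :=
  WeaklyFDegenerate G (fun _ => (k : ℤ))

/-- The weak degeneracy `wd(G)`. -/
noncomputable def weakDegeneracy {V : Type u} (G : SimpleGraph V) : ℕ :=
  sInf {k | WeaklyDegenerate G k}

/-- The degeneracy `d(G)`. -/
noncomputable def degeneracy {V : Type u} (G : SimpleGraph V) : ℕ :=
  sInf {k | Degenerate G k}

/-- A combinatorial plane graph: a graph together with a family of faces, each given by a
closed boundary walk, such that every edge lies on boundary walks with total multiplicity two,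
and satisfying Euler's formula when the graph is connected. -/
structure PlaneGraph (V : Type u) [Fintype V] [DecidableEq V] where
  graph : SimpleGraph V
  numFaces : ℕ
  root : Fin numFaces → V
  boundary : (i : Fin numFaces) → graph.Walk (root i) (root i)
  edge_two_faces : ∀ e ∈ graph.edgeSet, (∑ i, ((boundary i).edges.count e)) = 2
  euler : graph.Connected →
    (Fintype.card V : ℤ) - (graph.edgeSet.ncard : ℤ) + (numFaces : ℤ) = 2

/-- The size of a face: the length of its boundary closed walk. -/
def PlaneGraph.faceSize {V : Type u} [Fintype V] [DecidableEq V] (P : PlaneGraph V)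
    (i : Fin P.numFaces) : ℕ :=
  (P.boundary i).length

/-- A graph is planar if it admits a plane embedding. -/
def SimpleGraph.IsPlanarEmb {V : Type u} [Fintype V] [DecidableEq V]
    (G : SimpleGraph V) : Prop :=
  ∃ P : PlaneGraph V, P.graph = G

/-- `G` has no cycle of length `n`. -/
def NoCycleLength {V : Type u} (G : SimpleGraph V) (n : ℕ) : Prop :=
  ∀ (v : V) (c : G.Walk v v), c.IsCycle → c.length ≠ n

/-- A triangle of `G`, as a set of three pairwise adjacent vertices. -/
def IsTriangle {V : Type u} (G : SimpleGraph V) (s : Finset V) : Prop :=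
  s.card = 3 ∧ ∀ x ∈ s, ∀ y ∈ s, x ≠ y → G.Adj x y

/-- Any two (distinct) triangles of `G` are at distance at least `2`. -/
def TrianglesFar {V : Type u} (G : SimpleGraph V) : Prop :=
  ∀ s t : Finset V, IsTriangle G s → IsTriangle G t → s ≠ t →
    ∀ x ∈ s, ∀ y ∈ t, 2 ≤ G.dist x y

lemma weakReduce_list_color {V : Type u} (G : SimpleGraph V) (S : Set V) (f : V → ℤ)
    (h : WeakReduce G S f) :
    ∀ L : V → Finset ℕ, (∀ x ∈ S, f x < ((L x).card : ℤ)) →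
      ∃ c : V → ℕ, (∀ x ∈ S, c x ∈ L x) ∧
        ∀ x ∈ S, ∀ y ∈ S, G.Adj x y → c x ≠ c y := by
  classical
  induction h with
  | nil f =>
      intro L _
      exact ⟨fun _ => 0, fun x hx => absurd hx (by simp), fun x hx => absurd hx (by simp)⟩
  | delete S f u hu h0 hpos ih IH =>
      intro L hL
      have hcu : (L u).Nonempty := by
        rw [← Finset.card_pos]
        have := hL u hu
        omega
      obtain ⟨cu, hcuL⟩ := hcu
      set L' : V → Finset ℕ := fun x => if G.Adj u x then (L x).erase cu else L x with hL'
      obtain ⟨c, hc1, hc2⟩ := IH L' (by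
        intro x hx
        have hx1 : f x < ((L x).card : ℤ) := hL x hx.1
        by_cases hadj : G.Adj u x
        · have h1 : (L x).card - 1 ≤ ((L x).erase cu).card := Finset.pred_card_le_card_erase
          simp only [hL', if_pos hadj]
          have hcard : (0:ℤ) < (L x).card := lt_of_le_of_lt (by
            have := hpos x hx; simp [if_pos hadj] at this; omega) hx1
          push_cast
          omega
        · simp only [hL', if_neg hadj]
          simpa [hadj] using hx1)
      refine ⟨fun x => if x = u then cu else c x, ?_, ?_⟩
      · intro x hx
        by_cases hxu : x = u
        · simpa [hxu] using hcuL
        · have := hc1 x ⟨hx, hxu⟩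
          simp only [hL'] at this
          simp only [if_neg hxu]
          split_ifs at this with hadj
          · exact Finset.mem_of_mem_erase this
          · exact this
      · intro x hx y hy hxy
        by_cases hxu : x = u
        · have hyu : y ≠ u := by
            rintro rfl
            rw [hxu] at hxy
            exact G.irrefl hxy
          have hadj : G.Adj u y := hxu ▸ hxy
          have hmem := hc1 y ⟨hy, hyu⟩
          simp only [hL', if_pos hadj] at hmem
          simp only [if_pos hxu, if_neg hyu]
          exact fun h => (Finset.ne_of_mem_erase hmem) h.symm
        · by_cases hyu : y = u
          · have hadj : G.Adj u x := hyu ▸ hxy.symm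
            have hmem := hc1 x ⟨hx, hxu⟩
            simp only [hL', if_pos hadj] at hmem
            simp only [if_pos hyu, if_neg hxu]
            exact Finset.ne_of_mem_erase hmem
          · simpa [hxu, hyu] using hc2 x ⟨hx, hxu⟩ y ⟨hy, hyu⟩ hxy
  | deleteSave S f a b ha hb hab hfab hpos IHred IH =>
      intro L hL
      have hba : b ≠ a := hab.ne'
      have hfb0 : 0 ≤ f b := by
        have := hpos b ⟨hb, hba⟩
        simpa using this
      have hLa : 0 < ((L a).card : ℤ) := lt_of_le_of_lt (by omega) (hL a ha)
      -- choose a color for a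
      have hex : ∃ ca ∈ L a, (ca ∉ L b ∨ f b < (((L b).erase ca).card : ℤ)) := by
        by_cases hsd : (L a \ L b).Nonempty
        · obtain ⟨ca, hca⟩ := hsd
          rw [Finset.mem_sdiff] at hca
          exact ⟨ca, hca.1, Or.inl hca.2⟩
        · obtain ⟨ca, hca⟩ := Finset.card_pos.mp (by exact_mod_cast hLa)
          refine ⟨ca, hca, Or.inr ?_⟩
          have hsub : L a ⊆ L b := by
            intro z hz
            by_contra hzb
            exact hsd ⟨z, Finset.mem_sdiff.mpr ⟨hz, hzb⟩⟩
          have h1 : (L a).card ≤ (L b).card := Finset.card_le_card hsub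
          have h2 : (L b).card - 1 ≤ ((L b).erase ca).card := Finset.pred_card_le_card_erase
          have h3 : f a < ((L a).card : ℤ) := hL a ha
          push_cast
          omega
      obtain ⟨ca, hcaL, hca⟩ := hex
      set L' : V → Finset ℕ := fun x => if G.Adj a x then (L x).erase ca else L x with hL'
      obtain ⟨c, hc1, hc2⟩ := IH L' (by
        intro x hx
        have hx1 : f x < ((L x).card : ℤ) := hL x hx.1
        by_cases hadj : G.Adj a x
        · simp only [hL', if_pos hadj]
          by_cases hxb : x = b
          · subst hxb
            rcases hca with hca | hca
            · rw [Finset.erase_eq_of_notMem hca]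
              simpa [hba] using hx1
            · simpa [hba] using hca
          · have h1 : (L x).card - 1 ≤ ((L x).erase ca).card := Finset.pred_card_le_card_erase
            have hcard : (0:ℤ) < (L x).card := lt_of_le_of_lt (by
              have := hpos x hx; simp [hadj, hxb] at this; omega) hx1
            simp only [if_pos (show G.Adj a x ∧ x ≠ b from ⟨hadj, hxb⟩)]
            push_cast
            omega
        · simp only [hL', if_neg hadj]
          have : ¬ (G.Adj a x ∧ x ≠ b) := fun h => hadj h.1
          simpa [this] using hx1)
      refine ⟨fun x => if x = a then ca else c x, ?_, ?_⟩
      · intro x hx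
        by_cases hxa : x = a
        · simpa [hxa] using hcaL
        · have := hc1 x ⟨hx, hxa⟩
          simp only [hL'] at this
          simp only [if_neg hxa]
          split_ifs at this with hadj
          · exact Finset.mem_of_mem_erase this
          · exact this
      · intro x hx y hy hxy
        by_cases hxa : x = a
        · have hya : y ≠ a := by
            rintro rfl
            rw [hxa] at hxy
            exact G.irrefl hxy
          have hadj : G.Adj a y := hxa ▸ hxy
          have hmem := hc1 y ⟨hy, hya⟩
          simp only [hL', if_pos hadj] at hmem
          simp only [if_pos hxa, if_neg hya]
          exact fun h => (Finset.ne_of_mem_erase hmem) h.symm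
        · by_cases hya : y = a
          · have hadj : G.Adj a x := hya ▸ hxy.symm
            have hmem := hc1 x ⟨hx, hxa⟩
            simp only [hL', if_pos hadj] at hmem
            simp only [if_pos hya, if_neg hxa]
            exact Finset.ne_of_mem_erase hmem
          · simpa [hxa, hya] using hc2 x ⟨hx, hxa⟩ y ⟨hy, hya⟩ hxy

lemma weakReduce_of_bound {V : Type u} [Fintype V] (G : SimpleGraph V) :
    ∀ (n : ℕ) (S : Set V) (f : V → ℤ), S.ncard ≤ n →
      (∀ x ∈ S, (S.ncard : ℤ) - 1 ≤ f x) → WeakReduce G S f := by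
  classical
  intro n
  induction n with
  | zero =>
      intro S f hn _
      have : S = ∅ := by
        have := Set.ncard_eq_zero (S.toFinite) |>.mp (Nat.le_zero.mp hn)
        exact this
      rw [this]
      exact WeakReduce.nil f
  | succ n IH =>
      intro S f hn hf
      rcases S.eq_empty_or_nonempty with rfl | ⟨u, hu⟩
      · exact WeakReduce.nil f
      · have hS1 : 1 ≤ S.ncard := (Set.ncard_pos S.toFinite).mpr ⟨u, hu⟩
        have hdiff : (S \ {u}).ncard = S.ncard - 1 := Set.ncard_diff_singleton_of_mem hu
        refine WeakReduce.delete S f u hu ?_ ?_ ?_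
        · have := hf u hu; omega
        · intro x hx
          have h2 : 2 ≤ S.ncard := by
            have : ({u, x} : Set V) ⊆ S := by
              intro z hz; rcases hz with rfl | hz
              · exact hu
              · simp at hz; subst hz; exact hx.1
            have := Set.ncard_le_ncard this S.toFinite
            rwa [Set.ncard_pair (Ne.symm hx.2)] at this
          have := hf x hx.1
          split_ifs <;> omega
        · apply IH
          · omega
          · intro x hx
            have h2 : 2 ≤ S.ncard := by
              have : ({u, x} : Set V) ⊆ S := by
                intro z hz; rcases hz with rfl | hz
                · exact hu
                · simp at hz; subst hz; exact hx.1
              have := Set.ncard_le_ncard this S.toFinite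
              rwa [Set.ncard_pair (Ne.symm hx.2)] at this
            have := hf x hx.1
            rw [hdiff]
            split_ifs <;> push_cast <;> omega

lemma weaklyDegenerate_card {V : Type u} [Fintype V] (G : SimpleGraph V) :
    WeaklyDegenerate G (Fintype.card V) := by
  apply weakReduce_of_bound G (Fintype.card V)
  · rw [Set.ncard_univ, Nat.card_eq_fintype_card]
  · intro x _
    rw [Set.ncard_univ]
    simp only [Nat.card_eq_fintype_card]
    omega

/-- for every finite graph `G`, `χ(G) ≤ wd(G) + 1`. -/
theorem stmt5 {V : Type u} [Fintype V] (G : SimpleGraph V) :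
    G.chromaticNumber ≤ (weakDegeneracy G : ℕ∞) + 1 := by
  classical
  set k := weakDegeneracy G with hk
  have hmem : WeaklyDegenerate G k :=
    Nat.sInf_mem (⟨Fintype.card V, weaklyDegenerate_card G⟩ : {k | WeaklyDegenerate G k}.Nonempty)
  obtain ⟨c, hc1, hc2⟩ := weakReduce_list_color G Set.univ _ hmem
    (fun _ => Finset.range (k + 1)) (by intro x _; simp)
  have hcol : G.Colorable (k + 1) := by
    refine ⟨SimpleGraph.Coloring.mk (fun v => (⟨c v, ?_⟩ : Fin (k + 1))) ?_⟩
    · have := hc1 v (Set.mem_univ v)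
      simpa using this
    · intro v w hvw h
      exact hc2 v (Set.mem_univ v) w (Set.mem_univ w) hvw (by simpa using congrArg Fin.val h)
  have := hcol.chromaticNumber_le
  calc G.chromaticNumber ≤ ((k + 1 : ℕ) : ℕ∞) := this
    _ = (k : ℕ∞) + 1 := by push_cast; rfl
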